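/- For a partial order X let θ_0(X) := sup{α ∈ Ord : the well order α embeds into X} and θ_1(X) := sup{α ∈ Ord : the reverse well order α* embeds into X}. Assume condition (∗), where each X_i is a partial order ⟨X_i, <_i⟩. If the sequence of pairs of ordinals ⟨⟨θ_0(X_i), θ_1(X_i)⟩ : i ∈ I⟩ is finite-to-one (there is no infinite J ⊆ I on which all these pairs are equal), then ⋃_{i∈I} X_i is a reversible poset. -/

import Mathlib

universe u v w

section Defs

variable {α : Type*} {β : Type*}

/-- `f` is a homomorphism from `⟨α, r⟩` to `⟨β, s⟩`. -/
def IsHom (r : α → α → Prop) (s : β → β → Prop) (f : α → β) : Prop :=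
  ∀ x y, r x y → s (f x) (f y)

/-- A condensation is a bijective homomorphism. -/
def IsCond (r : α → α → Prop) (s : β → β → Prop) (f : α → β) : Prop :=
  Function.Bijective f ∧ IsHom r s f

/-- A monomorphism is an injective homomorphism. -/
def IsMono (r : α → α → Prop) (s : β → β → Prop) (f : α → β) : Prop :=
  Function.Injective f ∧ IsHom r s f

/-- An isomorphism of binary structures. -/
def IsIso (r : α → α → Prop) (s : β → β → Prop) (f : α → β) : Prop :=
  Function.Bijective f ∧ ∀ x y, r x y ↔ s (f x) (f y)

/-- A binary structure is reversible iff every self-condensation is an automorphism. -/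
def Reversible (r : α → α → Prop) : Prop :=
  ∀ f : α → α, IsCond r r f → IsIso r r f

/-- A binary structure is connected iff it has exactly one component: it is nonempty and
the least equivalence relation containing `r` relates any two points. -/
def Connected (r : α → α → Prop) : Prop :=
  Nonempty α ∧ ∀ x y, Relation.EqvGen r x y

/-- The relation of the disjoint union of the structures `⟨X i, R i⟩`. -/
def unionRel {I : Type*} {X : I → Type*} (R : ∀ i, X i → X i → Prop) :
    (Σ i, X i) → (Σ i, X i) → Prop :=
  fun a b => ∃ h : a.1 = b.1, R b.1 (h ▸ a.2) b.2

end Defs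

/-- `θ₀(X)`: the supremum of the ordinals `α` such that the well order `α` embeds into the
poset `X`. -/
noncomputable def theta0 (X : Type u) [PartialOrder X] : Ordinal.{u} :=
  sSup {α : Ordinal.{u} |
    ∃ f : α.ToType → X, Function.Injective f ∧ ∀ x y, x < y ↔ f x < f y}

/-- `θ₁(X)`: the supremum of the ordinals `α` such that the reverse well order `α*` embeds
into the poset `X`. -/
noncomputable def theta1 (X : Type u) [PartialOrder X] : Ordinal.{u} :=
  sSup {α : Ordinal.{u} |
    ∃ f : α.ToType → X, Function.Injective f ∧ ∀ x y, x < y ↔ f y < f x}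

/- ## Auxiliary material -/

section Aux

variable {I : Type*} {X : I → Type*}

lemma unionRel_mk_iff {R : ∀ i, X i → X i → Prop} {i : I} {u v : X i} :
    unionRel R ⟨i, u⟩ ⟨i, v⟩ ↔ R i u v := by
  constructor
  · rintro ⟨h, hr⟩; exact hr
  · intro hr; exact ⟨rfl, hr⟩

lemma sigma_eta {a : Σ i, X i} {i : I} (h : a.1 = i) : a = ⟨i, h ▸ a.2⟩ := by
  subst h; rfl

/-- Restrict a map of the disjoint union to a component. -/
def restrictMap (h : (Σ i, X i) → (Σ i, X i)) (i j : I)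
    (hh : ∀ x : X i, (h ⟨i, x⟩).1 = j) (x : X i) : X j :=
  (hh x) ▸ (h ⟨i, x⟩).2

lemma restrictMap_spec (h : (Σ i, X i) → (Σ i, X i)) (i j : I)
    (hh : ∀ x : X i, (h ⟨i, x⟩).1 = j) (x : X i) :
    h ⟨i, x⟩ = ⟨j, restrictMap h i j hh x⟩ :=
  sigma_eta (hh x)

lemma restrictMap_inj {h : (Σ i, X i) → (Σ i, X i)} (hinj : Function.Injective h) (i j : I)
    (hh : ∀ x : X i, (h ⟨i, x⟩).1 = j) : Function.Injective (restrictMap h i j hh) := by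
  intro x y hxy
  have h1 : h ⟨i, x⟩ = h ⟨i, y⟩ := by
    rw [restrictMap_spec h i j hh x, restrictMap_spec h i j hh y, hxy]
  simpa using hinj h1

lemma restrictMap_hom {R : ∀ i, X i → X i → Prop} {h : (Σ i, X i) → (Σ i, X i)}
    (hhom : IsHom (unionRel R) (unionRel R) h) (i j : I)
    (hh : ∀ x : X i, (h ⟨i, x⟩).1 = j) :
    ∀ x y, R i x y → R j (restrictMap h i j hh x) (restrictMap h i j hh y) := by
  intro x y hxy
  have h1 : unionRel R (h ⟨i, x⟩) (h ⟨i, y⟩) := hhom _ _ ⟨rfl, hxy⟩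
  rw [restrictMap_spec h i j hh x, restrictMap_spec h i j hh y] at h1
  exact unionRel_mk_iff.mp h1

lemma ishom_iterate {γ : Type*} {r : γ → γ → Prop} {f : γ → γ} (h : IsHom r r f) (n : ℕ) :
    IsHom r r f^[n] := by
  induction n with
  | zero => intro x y hxy; simpa using hxy
  | succ n ih =>
    intro x y hxy
    rw [Function.iterate_succ_apply, Function.iterate_succ_apply]
    exact ih _ _ (h _ _ hxy)

end Aux

lemma theta0_mono {X Y : Type u} [PartialOrder X] [PartialOrder Y] (F : X → Y)
    (hinj : Function.Injective F) (hhom : ∀ x y : X, x < y → F x < F y) :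
    theta0 X ≤ theta0 Y := by
  apply csSup_le_csSup'
  · refine ⟨(Order.succ (Cardinal.mk Y)).ord, fun α hα => ?_⟩
    obtain ⟨f, hf, -⟩ := hα
    have h1 : α.card ≤ Cardinal.mk Y := by
      have := Cardinal.mk_le_of_injective hf
      rwa [Cardinal.mk_toType] at this
    exact le_of_lt (Cardinal.lt_ord.mpr (Order.lt_succ_iff.mpr h1))
  · rintro α ⟨e, einj, eiff⟩
    refine ⟨F ∘ e, hinj.comp einj, fun x y => ⟨fun h => hhom _ _ ((eiff x y).mp h), ?_⟩⟩
    intro h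
    rcases lt_trichotomy x y with h1 | h1 | h1
    · exact h1
    · subst h1; exact absurd h (lt_irrefl _)
    · exact absurd (hhom _ _ ((eiff y x).mp h1)) (lt_asymm h)

lemma theta1_mono {X Y : Type u} [PartialOrder X] [PartialOrder Y] (F : X → Y)
    (hinj : Function.Injective F) (hhom : ∀ x y : X, x < y → F x < F y) :
    theta1 X ≤ theta1 Y := by
  apply csSup_le_csSup'
  · refine ⟨(Order.succ (Cardinal.mk Y)).ord, fun α hα => ?_⟩
    obtain ⟨f, hf, -⟩ := hα
    have h1 : α.card ≤ Cardinal.mk Y := by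
      have := Cardinal.mk_le_of_injective hf
      rwa [Cardinal.mk_toType] at this
    exact le_of_lt (Cardinal.lt_ord.mpr (Order.lt_succ_iff.mpr h1))
  · rintro α ⟨e, einj, eiff⟩
    refine ⟨F ∘ e, hinj.comp einj, fun x y => ⟨fun h => hhom _ _ ((eiff x y).mp h), ?_⟩⟩
    intro h
    rcases lt_trichotomy x y with h1 | h1 | h1
    · exact h1
    · subst h1; exact absurd h (lt_irrefl _)
    · exact absurd (hhom _ _ ((eiff y x).mp h1)) (lt_asymm h)

/-- A nonincreasing sequence of ordinals is eventually constant. -/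
lemma ord_antitone_stab (a : ℕ → Ordinal.{u}) (ha : ∀ n, a (n + 1) ≤ a n) :
    ∃ N, ∀ n, N ≤ n → a n = a N := by
  have hanti : Antitone a := antitone_nat_of_succ_le ha
  obtain ⟨o, ⟨N, rfl⟩, hmin⟩ :=
    (wellFounded_lt (α := Ordinal.{u})).has_min (Set.range a) ⟨a 0, ⟨0, rfl⟩⟩
  exact ⟨N, fun n hn => le_antisymm (hanti hn) (not_lt.mp (hmin (a n) ⟨n, rfl⟩))⟩

/-- `g^[k] i = i` implies `g^[k*t] i = i`. -/
lemma iterate_mul_fixed {I : Type*} (g : I → I) (k t : ℕ) (i : I) (h : g^[k] i = i) :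
    g^[k * t] i = i := by
  induction t with
  | zero => simp
  | succ t ih => rw [Nat.mul_succ, Function.iterate_add_apply, h, ih]

/-- **Proposition (Statement 15).** Assume condition (∗), where the components
`⟨X i, <⟩`, `i ∈ I`, are pairwise disjoint (realized by a sigma type), connected and
reversible partial orders. If the sequence of pairs of ordinals `⟨⟨θ₀(X i), θ₁(X i)⟩ : i ∈ I⟩`
is finite-to-one (there is no infinite `J ⊆ I` on which all these pairs are equal), then the
disjoint union `⋃_{i∈I} X i` is a reversible poset. -/
theorem stmt15 {I : Type u} {X : I → Type v} [∀ i, PartialOrder (X i)]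
    (hconn : ∀ i, Connected (fun x y : X i => x < y))
    (hrev : ∀ i, Reversible (fun x y : X i => x < y))
    (hfto : ¬ ∃ J : Set I, J.Infinite ∧ ∀ i ∈ J, ∀ j ∈ J,
      theta0 (X i) = theta0 (X j) ∧ theta1 (X i) = theta1 (X j)) :
    Reversible (unionRel (fun i => ((· < ·) : X i → X i → Prop))) := by
  classical
  set R : ∀ i, X i → X i → Prop := fun i => ((· < ·) : X i → X i → Prop) with hRdef
  rintro f ⟨hbij, hhom⟩
  let pt : ∀ i, X i := fun i => Classical.choice (hconn i).1
  let g : I → I := fun i => (f ⟨i, pt i⟩).1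
  -- f maps each component into a single component
  have hfst : ∀ a : (Σ i, X i), (f a).1 = g a.1 := by
    rintro ⟨i, x⟩
    have key : ∀ x y : X i, Relation.EqvGen (· < ·) x y →
        (f ⟨i, x⟩).1 = (f ⟨i, y⟩).1 := by
      intro x y h
      induction h with
      | rel u v huv =>
        obtain ⟨e, -⟩ := hhom ⟨i, u⟩ ⟨i, v⟩ ⟨rfl, huv⟩
        exact e
      | refl u => rfl
      | symm u v _ ih => exact ih.symm
      | trans u v w _ _ ih1 ih2 => exact ih1.trans ih2
    exact key x (pt i) ((hconn i).2 x (pt i))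
  have hgsurj : Function.Surjective g := by
    intro j
    obtain ⟨a, ha⟩ := hbij.2 ⟨j, pt j⟩
    exact ⟨a.1, by rw [← hfst a, ha]⟩
  -- theta monotone along g
  have hth0 : ∀ i, theta0 (X i) ≤ theta0 (X (g i)) := fun i =>
    theta0_mono (restrictMap f i (g i) (fun x => hfst ⟨i, x⟩))
      (restrictMap_inj hbij.1 i (g i) _) (restrictMap_hom hhom i (g i) _)
  have hth1 : ∀ i, theta1 (X i) ≤ theta1 (X (g i)) := fun i =>
    theta1_mono (restrictMap f i (g i) (fun x => hfst ⟨i, x⟩))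
      (restrictMap_inj hbij.1 i (g i) _) (restrictMap_hom hhom i (g i) _)
  -- every index is periodic under g
  have hper : ∀ i, ∃ k, 0 < k ∧ g^[k] i = i := by
    intro i
    set σ : I → I := Function.surjInv hgsurj with hσdef
    have hσ : ∀ j, g (σ j) = j := fun j => Function.surjInv_eq hgsurj j
    set c : ℕ → I := fun n => σ^[n] i with hcdef
    have hcs : ∀ n, g (c (n + 1)) = c n := by
      intro n
      show g (σ^[n + 1] i) = σ^[n] i
      rw [Function.iterate_succ_apply']
      exact hσ _
    have hct : ∀ t n, g^[t] (c (n + t)) = c n := by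
      intro t
      induction t with
      | zero => intro n; simp
      | succ t ih =>
        intro n
        rw [Function.iterate_succ_apply, show n + (t + 1) = (n + t) + 1 from rfl,
          hcs (n + t)]
        exact ih n
    have ha0 : ∀ n, theta0 (X (c (n + 1))) ≤ theta0 (X (c n)) := by
      intro n
      have := hth0 (c (n + 1))
      rwa [hcs n] at this
    have ha1 : ∀ n, theta1 (X (c (n + 1))) ≤ theta1 (X (c n)) := by
      intro n
      have := hth1 (c (n + 1))
      rwa [hcs n] at this
    obtain ⟨N0, hN0⟩ := ord_antitone_stab (fun n => theta0 (X (c n))) ha0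
    obtain ⟨N1, hN1⟩ := ord_antitone_stab (fun n => theta1 (X (c n))) ha1
    set N := max N0 N1 with hNdef
    by_cases hinj : Function.Injective (fun n => c (N + n))
    · exfalso
      apply hfto
      refine ⟨Set.range (fun n => c (N + n)), Set.infinite_range_of_injective hinj, ?_⟩
      rintro _ ⟨n, rfl⟩ _ ⟨m, rfl⟩
      constructor
      · show theta0 (X (c (N + n))) = theta0 (X (c (N + m)))
        rw [hN0 (N + n) (le_trans (le_max_left _ _) (Nat.le_add_right _ _)),
          hN0 (N + m) (le_trans (le_max_left _ _) (Nat.le_add_right _ _))]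
      · show theta1 (X (c (N + n))) = theta1 (X (c (N + m)))
        rw [hN1 (N + n) (le_trans (le_max_right _ _) (Nat.le_add_right _ _)),
          hN1 (N + m) (le_trans (le_max_right _ _) (Nat.le_add_right _ _))]
    · have key : ∀ m m', m < m' → c (N + m) = c (N + m') → ∃ k, 0 < k ∧ g^[k] i = i := by
        intro m m' hlt heq
        set k := m' - m with hkdef
        have hk : 0 < k := Nat.sub_pos_of_lt hlt
        have h1 : g^[k] (c (N + m')) = c (N + m) := by
          have := hct k (N + m)
          rwa [show (N + m) + k = N + m' from by omega] at this
        have hper' : g^[k] (c (N + m')) = c (N + m') := by rw [h1, heq]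
        have h2 : g^[N + m'] (c (N + m')) = i := by
          have := hct (N + m') 0
          simp at this; exact this
        refine ⟨k, hk, ?_⟩
        rw [← h2, ← Function.iterate_add_apply, Nat.add_comm k (N + m'),
          Function.iterate_add_apply, hper']
      unfold Function.Injective at hinj
      push_neg at hinj
      obtain ⟨m, m', h1, h2⟩ := hinj
      rcases lt_or_gt_of_ne h2 with h3 | h3
      · exact key m m' h3 h1
      · exact key m' m h3 h1.symm
  -- g is injective
  have hginj : Function.Injective g := by
    intro a b hab
    obtain ⟨ka, hka, hpa⟩ := hper a
    obtain ⟨kb, hkb, hpb⟩ := hper b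
    have h1 : g^[ka * kb] a = a := iterate_mul_fixed g ka kb a hpa
    have h2 : g^[ka * kb] b = b := by
      rw [Nat.mul_comm]; exact iterate_mul_fixed g kb ka b hpb
    have h3 : g^[ka * kb] a = g^[ka * kb] b := by
      obtain ⟨n, hn⟩ : ∃ n, ka * kb = n + 1 := ⟨ka * kb - 1, by have := Nat.mul_pos hka hkb; omega⟩
      rw [hn, Function.iterate_succ_apply, Function.iterate_succ_apply, hab]
    rw [h1, h2] at h3
    exact h3
  -- component tracking of iterates
  have hfstIter : ∀ (n : ℕ) (a : Σ i, X i), (f^[n] a).1 = g^[n] a.1 := by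
    intro n
    induction n with
    | zero => intro a; rfl
    | succ n ih =>
      intro a
      rw [Function.iterate_succ_apply, Function.iterate_succ_apply, ih (f a), hfst a]
  -- conclusion
  refine ⟨hbij, ?_⟩
  rintro ⟨i, x⟩ ⟨j, y⟩
  constructor
  · exact fun h => hhom _ _ h
  · intro h
    obtain ⟨h1, -⟩ := id h
    have hij : i = j := hginj (by rw [← hfst ⟨i, x⟩, ← hfst ⟨j, y⟩]; exact h1)
    subst hij
    obtain ⟨k, hk, hgk⟩ := hper i
    have hhk : ∀ z : X i, (f^[k] ⟨i, z⟩).1 = i := fun z => by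
      rw [hfstIter k ⟨i, z⟩]; exact hgk
    set Fk : X i → X i := restrictMap f^[k] i i hhk with hFkdef
    have hFkinj : Function.Injective Fk := restrictMap_inj (hbij.1.iterate k) i i hhk
    have hFkhom : ∀ u v : X i, u < v → Fk u < Fk v :=
      restrictMap_hom (ishom_iterate hhom k) i i hhk
    have hFksurj : Function.Surjective Fk := by
      intro z
      obtain ⟨a, ha⟩ := (hbij.2.iterate k) ⟨i, z⟩
      obtain ⟨i', x'⟩ := a
      have hgi : g^[k] i' = i := by rw [← hfstIter k ⟨i', x'⟩, ha]
      have hi' : i' = i := hginj.iterate k (by rw [hgi, hgk])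
      subst hi'
      refine ⟨x', ?_⟩
      have hsp := restrictMap_spec f^[k] _ _ hhk x'
      rw [ha] at hsp
      exact (by simpa using hsp : z = Fk x').symm
    have hiso := hrev i Fk ⟨⟨hFkinj, hFksurj⟩, hFkhom⟩
    have h2 : unionRel R (f^[k] ⟨i, x⟩) (f^[k] ⟨i, y⟩) := by
      obtain ⟨m, hm⟩ : ∃ m, k = m + 1 := ⟨k - 1, by omega⟩
      rw [hm, Function.iterate_succ_apply, Function.iterate_succ_apply]
      exact ishom_iterate hhom m _ _ h
    rw [restrictMap_spec f^[k] _ _ hhk x, restrictMap_spec f^[k] _ _ hhk y] at h2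
    exact ⟨rfl, (hiso.2 x y).mpr (unionRel_mk_iff.mp h2)⟩
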